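/- Let e, d be real numbers with e > 0, d > 0, let n be a natural number with n ≥ 1 and n·d > e, and define the backup finish times F : ℕ → ℝ by F 0 = e + d and F (i+1) = max (F i) ((⌊(i+1)/n⌋ + 1)·e) + d, and the primary finish times P : ℕ → ℝ by P i = (⌊i/n⌋ + 1)·e, where ⌊·/n⌋ denotes natural-number division. Then for every real number L there exists a natural number i such that F i − P i > L. -/

import Mathlib

/-- With primary finish times `P i = (⌊i/n⌋ + 1)·e` and backup finish times `F`
given by `F 0 = e + d` and `F (i+1) = max (F i) ((⌊(i+1)/n⌋ + 1)·e) + d`,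
if `n·d > e` then no bound `L` bounds the replication lag `F i − P i`. -/
theorem full_unbounded_replication_lag
    (e d : ℝ) (he : 0 < e) (hd : 0 < d)
    (n : ℕ) (hn : 1 ≤ n) (hnd : (n : ℝ) * d > e)
    (F : ℕ → ℝ)
    (hF0 : F 0 = e + d)
    (hFs : ∀ i : ℕ, F (i + 1) = max (F i) ((((i + 1) / n + 1 : ℕ) : ℝ) * e) + d)
    (P : ℕ → ℝ)
    (hP : ∀ i : ℕ, P i = ((i / n + 1 : ℕ) : ℝ) * e) :
    ∀ L : ℝ, ∃ i : ℕ, F i - P i > L := by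
  intro L
  have hnR : (0:ℝ) < (n:ℝ) := by exact_mod_cast Nat.pos_of_ne_zero (by omega)
  -- lower bound on F
  have hFlb : ∀ i : ℕ, e + (i + 1 : ℝ) * d ≤ F i := by
    intro i
    induction i with
    | zero => simp [hF0]
    | succ k ih =>
      have := hFs k
      have h1 : F k + d ≤ F (k+1) := by
        rw [this]
        have : F k ≤ max (F k) ((((k + 1) / n + 1 : ℕ) : ℝ) * e) := le_max_left _ _
        linarith
      push_cast
      push_cast at ih
      linarith
  -- upper bound on P
  have hPub : ∀ i : ℕ, P i ≤ (i : ℝ) * e / n + e := by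
    intro i
    rw [hP i]
    have h1 : (n : ℝ) * ((i / n : ℕ) : ℝ) ≤ (i : ℝ) := by
      exact_mod_cast Nat.mul_div_le i n
    have h2 : ((i / n : ℕ) : ℝ) ≤ (i : ℝ) / n := by
      rw [le_div_iff₀ hnR]; nlinarith
    push_cast
    have := mul_le_mul_of_nonneg_right h2 he.le
    rw [add_mul, one_mul]
    calc ((i / n : ℕ) : ℝ) * e + e ≤ (i : ℝ) / n * e + e := by linarith
      _ = (i : ℝ) * e / n + e := by ring
  set c : ℝ := ((n:ℝ) * d - e) / n with hc
  have hcpos : 0 < c := div_pos (by linarith) hnR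
  obtain ⟨i, hi⟩ := exists_nat_gt (L / c)
  refine ⟨i, ?_⟩
  have hFi := hFlb i
  have hPi := hPub i
  have hic : L < (i : ℝ) * c := by
    rw [div_lt_iff₀ hcpos] at hi; linarith
  have key : (i : ℝ) * c ≤ F i - P i := by
    have : F i - P i ≥ (e + ((i:ℝ)+1) * d) - ((i : ℝ) * e / n + e) := by linarith
    have heq : (e + ((i:ℝ)+1) * d) - ((i : ℝ) * e / n + e) = (i:ℝ) * c + d := by
      rw [hc]; field_simp; ring
    linarith [this, heq ▸ this]
  linarith
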